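/- Let α > 0 and let (u₁,…,u_n) ∈ (0,∞)ⁿ be a positive solution of the discrete system (Sα). Define E := Σ_{k=1}^{n−1} ((g₁(u_k) + g₁(u_{k+1}))/2)(u_{k+1} − u_k) − (G₁(u_n) − G₁(u₁)). Then ½α²g₂²(u_n) − (G₁(u_n) − G₁(u₁)) = E + (h²/8)(g₁²(u_n) − g₁²(u₁)). Moreover, regarding E as a function of u₁ > 0 via u_k = U_k(u₁) for 2 ≤ k ≤ n, E(u₁) is positive and increasing on (0,∞). -/

import Mathlib

noncomputable section

/-- `Useq g1 h k` is the function `U_{k+1}` (0-indexed version of the recursion). -/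
def Useq (g1 : ℝ → ℝ) (h : ℝ) : ℕ → ℝ → ℝ
  | 0 => fun x => x
  | 1 => fun x => x + h ^ 2 / 2 * g1 x
  | k + 2 => fun x =>
      2 * Useq g1 h (k + 1) x - Useq g1 h k x + h ^ 2 * g1 (Useq g1 h (k + 1) x)

/-- `discU g1 h k` is the function `U_k` from the paper, for `1 ≤ k`. -/
def discU (g1 : ℝ → ℝ) (h : ℝ) (k : ℕ) : ℝ → ℝ := Useq g1 h (k - 1)

/-- The function `A(u₁)` from the paper. -/
def discA (g1 g2 : ℝ → ℝ) (h : ℝ) (n : ℕ) (x : ℝ) : ℝ :=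
  ((discU g1 h n x - discU g1 h (n - 1) x) / h + h / 2 * g1 (discU g1 h n x)) /
    g2 (discU g1 h n x)

/-- `(u₁, …, u_n)` (encoded as `u : ℕ → ℝ` on indices `1,…,n`) is a positive solution of
the discrete system `(Sα)`. -/
def IsSolution (g1 g2 : ℝ → ℝ) (n : ℕ) (h α : ℝ) (u : ℕ → ℝ) : Prop :=
  (∀ k, 1 ≤ k → k ≤ n → 0 < u k) ∧
  u 2 - u 1 = h ^ 2 / 2 * g1 (u 1) ∧
  (∀ k, 2 ≤ k → k ≤ n - 1 → u (k + 1) - 2 * u k + u (k - 1) = h ^ 2 * g1 (u k)) ∧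
  u n - u (n - 1) = -(h ^ 2 / 2) * g1 (u n) + h * α * g2 (u n)

/-- `G₁`, the primitive of `g₁` vanishing at `0`. -/
def primG1 (g1 : ℝ → ℝ) (x : ℝ) : ℝ := ∫ t in (0:ℝ)..x, g1 t

/-- `g := g₁/g₂`. -/
def gg (g1 g2 : ℝ → ℝ) (x : ℝ) : ℝ := g1 x / g2 x

/-- `G := G₁/g₂²`. -/
def GG (g1 g2 : ℝ → ℝ) (x : ℝ) : ℝ := primG1 g1 x / (g2 x) ^ 2

/-- The trapezoidal-rule error `E` as a function of `u₁`. -/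
def trapError (g1 : ℝ → ℝ) (h : ℝ) (n : ℕ) (x : ℝ) : ℝ :=
  (∑ k ∈ Finset.Icc 1 (n - 1),
    (g1 (discU g1 h k x) + g1 (discU g1 h (k + 1) x)) / 2 *
      (discU g1 h (k + 1) x - discU g1 h k x)) -
  (primG1 g1 (discU g1 h n x) - primG1 g1 (discU g1 h 1 x))

/-- The Jacobian matrix `J(α,u)` of the system `(Sα)`. -/
def Jmat (g1 g2 : ℝ → ℝ) (n : ℕ) (h α : ℝ) (u : ℕ → ℝ) : Matrix (Fin n) (Fin n) ℝ :=
  Matrix.of fun i j =>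
    if i = j then
      (if (i : ℕ) = 0 then 1 + h ^ 2 / 2 * deriv g1 (u 1)
       else if (i : ℕ) = n - 1 then
         1 + h ^ 2 / 2 * deriv g1 (u n) - h * α * deriv g2 (u n)
       else 2 + h ^ 2 * deriv g1 (u ((i : ℕ) + 1)))
    else if (i : ℕ) + 1 = (j : ℕ) ∨ (j : ℕ) + 1 = (i : ℕ) then -1 else 0

open Set

section Helpers

lemma integral_linear (p q a b : ℝ) :
    ∫ t in a..b, (p + q * t) = p * (b - a) + q * (b ^ 2 - a ^ 2) / 2 := by
  rw [intervalIntegral.integral_add (intervalIntegrable_const)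
    ((intervalIntegral.intervalIntegrable_id (μ := MeasureTheory.volume) (a := a) (b := b)).const_mul q),
    intervalIntegral.integral_const, intervalIntegral.integral_const_mul, integral_id]
  simp [smul_eq_mul]; ring

lemma line_lemma {g : ℝ → ℝ} {a b t : ℝ} (hba : 0 < b - a) :
    ((b - t) / (b - a)) * g a + ((t - a) / (b - a)) * g b
      = (g a - (g b - g a) / (b - a) * a) + (g b - g a) / (b - a) * t := by
  have hne : b - a ≠ 0 := hba.ne'
  field_simp
  ring

lemma comb_eq {a b t : ℝ} (hba : 0 < b - a) :
    ((b - t) / (b - a)) • a + ((t - a) / (b - a)) • b = t := by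
  have hne : b - a ≠ 0 := hba.ne'
  simp only [smul_eq_mul]
  field_simp
  ring

lemma trap_le {g : ℝ → ℝ} (hgc : Continuous g) (hconv : ConvexOn ℝ (Set.Ici 0) g)
    {a b : ℝ} (ha : 0 ≤ a) (hab : a < b) :
    ∫ t in a..b, g t ≤ (g a + g b) / 2 * (b - a) := by
  have hba : (0:ℝ) < b - a := by linarith
  have hne : b - a ≠ 0 := hba.ne'
  set q : ℝ := (g b - g a) / (b - a) with hq
  set p : ℝ := g a - q * a with hp
  have hle : ∀ t ∈ Icc a b, g t ≤ p + q * t := by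
    intro t ht
    obtain ⟨ht1, ht2⟩ := ht
    have hl1 : (0:ℝ) ≤ (b - t) / (b - a) := div_nonneg (by linarith) hba.le
    have hl2 : (0:ℝ) ≤ (t - a) / (b - a) := div_nonneg (by linarith) hba.le
    have hsum : (b - t) / (b - a) + (t - a) / (b - a) = 1 := by field_simp; ring
    have hcomb := hconv.2 (mem_Ici.2 ha) (mem_Ici.2 (by linarith : (0:ℝ) ≤ b)) hl1 hl2 hsum
    rw [comb_eq hba] at hcomb
    simp only [smul_eq_mul] at hcomb
    calc g t ≤ ((b - t) / (b - a)) * g a + ((t - a) / (b - a)) * g b := hcomb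
      _ = p + q * t := line_lemma hba
  calc ∫ t in a..b, g t ≤ ∫ t in a..b, (p + q * t) := by
        apply intervalIntegral.integral_mono_on hab.le (hgc.intervalIntegrable a b)
          ((continuous_const.add (continuous_const.mul continuous_id)).intervalIntegrable a b) hle
    _ = p * (b - a) + q * (b ^ 2 - a ^ 2) / 2 := integral_linear p q a b
    _ = (g a + g b) / 2 * (b - a) := by rw [hp, hq]; field_simp; ring

lemma trap_lt {g : ℝ → ℝ} (hgc : Continuous g) (hconv : StrictConvexOn ℝ (Set.Ici 0) g)
    {a b : ℝ} (ha : 0 ≤ a) (hab : a < b) :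
    ∫ t in a..b, g t < (g a + g b) / 2 * (b - a) := by
  have hba : (0:ℝ) < b - a := by linarith
  have hne : b - a ≠ 0 := hba.ne'
  set q : ℝ := (g b - g a) / (b - a) with hq
  set p : ℝ := g a - q * a with hp
  have hlt : ∀ t ∈ Ioo a b, 0 < (p + q * t) - g t := by
    intro t ht
    obtain ⟨ht1, ht2⟩ := ht
    have hl1 : (0:ℝ) < (b - t) / (b - a) := div_pos (by linarith) hba
    have hl2 : (0:ℝ) < (t - a) / (b - a) := div_pos (by linarith) hba
    have hsum : (b - t) / (b - a) + (t - a) / (b - a) = 1 := by field_simp; ring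
    have hcomb := hconv.2 (mem_Ici.2 ha) (mem_Ici.2 (by linarith : (0:ℝ) ≤ b)) hab.ne hl1 hl2 hsum
    rw [comb_eq hba] at hcomb
    simp only [smul_eq_mul] at hcomb
    have h2 : ((b - t) / (b - a)) * g a + ((t - a) / (b - a)) * g b = p + q * t :=
      line_lemma hba
    linarith
  have hpos : 0 < ∫ t in a..b, ((p + q * t) - g t) :=
    intervalIntegral.intervalIntegral_pos_of_pos_on
      (((continuous_const.add (continuous_const.mul continuous_id)).sub hgc).intervalIntegrable a b)
      hlt hab
  have hsplit : (∫ t in a..b, ((p + q * t) - g t)) =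
      (∫ t in a..b, (p + q * t)) - ∫ t in a..b, g t :=
    intervalIntegral.integral_sub
      ((continuous_const.add (continuous_const.mul continuous_id)).intervalIntegrable a b)
      (hgc.intervalIntegrable a b)
  have hval : (∫ t in a..b, (p + q * t)) = (g a + g b) / 2 * (b - a) := by
    rw [integral_linear, hp, hq]; field_simp; ring
  rw [hsplit, hval] at hpos
  linarith

variable {g : ℝ → ℝ}

lemma my_deriv_contDiff (hg : ContDiff ℝ 3 g) : ContDiff ℝ 2 (deriv g) := by
  have := ContDiff.iterate_deriv' (𝕜 := ℝ) 2 1 (f := g) (by exact_mod_cast hg)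
  simpa using this

lemma my_deriv2_contDiff (hg : ContDiff ℝ 3 g) : ContDiff ℝ 1 (deriv (deriv g)) := by
  have := ContDiff.iterate_deriv' (𝕜 := ℝ) 1 2 (f := g) (by exact_mod_cast hg)
  simpa [Function.iterate_succ_apply', Function.comp] using this

lemma my_strictMono (hg : ContDiff ℝ 3 g) (hd : ∀ x > (0:ℝ), 0 < deriv g x) :
    StrictMonoOn g (Ici 0) := by
  apply strictMonoOn_of_deriv_pos (convex_Ici 0) (hg.continuous.continuousOn)
  intro x hx
  rw [interior_Ici] at hx
  exact hd x hx

lemma my_pos (hg : ContDiff ℝ 3 g) (hg0 : g 0 = 0) (hd : ∀ x > (0:ℝ), 0 < deriv g x) :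
    ∀ x > (0:ℝ), 0 < g x := by
  intro x hx
  have := my_strictMono hg hd (self_mem_Ici (a := (0:ℝ))) (mem_Ici.2 hx.le) hx
  rwa [hg0] at this

lemma my_strictConvex (hg : ContDiff ℝ 3 g) (hdd : ∀ x > (0:ℝ), 0 < deriv (deriv g) x) :
    StrictConvexOn ℝ (Ici 0) g := by
  apply strictConvexOn_of_deriv2_pos (convex_Ici 0) (hg.continuous.continuousOn)
  intro x hx
  rw [interior_Ici] at hx
  simpa [Function.iterate_succ_apply'] using hdd x hx

lemma my_deriv_strictMono (hg : ContDiff ℝ 3 g) (hdd : ∀ x > (0:ℝ), 0 < deriv (deriv g) x) :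
    StrictMonoOn (deriv g) (Ici 0) := by
  apply strictMonoOn_of_deriv_pos (convex_Ici 0) ((my_deriv_contDiff hg).continuous.continuousOn)
  intro x hx
  rw [interior_Ici] at hx
  exact hdd x hx

lemma my_deriv_convex (hg : ContDiff ℝ 3 g) (hddd : ∀ x > (0:ℝ), 0 ≤ deriv (deriv (deriv g)) x) :
    ConvexOn ℝ (Ici 0) (deriv g) := by
  apply convexOn_of_deriv2_nonneg (convex_Ici 0) ((my_deriv_contDiff hg).continuous.continuousOn)
  · rw [interior_Ici]
    exact ((my_deriv_contDiff hg).differentiable (by norm_num)).differentiableOn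
  · rw [interior_Ici]
    exact ((my_deriv2_contDiff hg).differentiable (by norm_num)).differentiableOn
  · intro x hx
    rw [interior_Ici] at hx
    simpa [Function.iterate_succ_apply'] using hddd x hx

lemma my_slope_lt (hg : ContDiff ℝ 3 g) (hdd : ∀ x > (0:ℝ), 0 < deriv (deriv g) x)
    {a b : ℝ} (ha : 0 ≤ a) (hab : a < b) :
    g b - g a < deriv g b * (b - a) := by
  obtain ⟨c, hc, hc'⟩ := exists_hasDerivAt_eq_slope g (deriv g) hab
    (hg.continuous.continuousOn)
    (fun x _ => ((hg.differentiable (by norm_num)) x).hasDerivAt)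
  have hcb : deriv g c < deriv g b :=
    my_deriv_strictMono hg hdd (mem_Ici.2 (by linarith [hc.1] : (0:ℝ) ≤ c))
      (mem_Ici.2 (by linarith [hc.2])) hc.2
  have hba : (0:ℝ) < b - a := by linarith
  have : g b - g a = deriv g c * (b - a) := by
    field_simp at hc'
    linarith [hc']
  rw [this]
  exact mul_lt_mul_of_pos_right hcb hba

lemma my_ftc (hg : ContDiff ℝ 3 g) (a b : ℝ) :
    ∫ t in a..b, deriv g t = g b - g a :=
  intervalIntegral.integral_deriv_eq_sub
    (fun x _ => (hg.differentiable (by norm_num)) x)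
    ((hg.continuous_deriv (by norm_num)).intervalIntegrable a b)

lemma primG1_hasDeriv (hgc : Continuous g) (a : ℝ) :
    HasDerivAt (primG1 g) (g a) a :=
  intervalIntegral.integral_hasDerivAt_right (hgc.intervalIntegrable 0 a)
    (hgc.stronglyMeasurableAtFilter _ _) hgc.continuousAt

lemma primG1_sub (hgc : Continuous g) (a b : ℝ) :
    primG1 g b - primG1 g a = ∫ t in a..b, g t := by
  unfold primG1
  rw [← intervalIntegral.integral_interval_sub_left (hgc.intervalIntegrable 0 b)
    (hgc.intervalIntegrable 0 a)]

end Helpers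

def Vseq (g1 : ℝ → ℝ) (h : ℝ) : ℕ → ℝ → ℝ
  | 0 => fun _ => 1
  | 1 => fun x => 1 + h ^ 2 / 2 * deriv g1 x
  | k + 2 => fun x =>
      2 * Vseq g1 h (k + 1) x - Vseq g1 h k x +
        h ^ 2 * (deriv g1 (Useq g1 h (k + 1) x) * Vseq g1 h (k + 1) x)

structure UVFacts (g1 : ℝ → ℝ) (h : ℝ) (x : ℝ) (k : ℕ) : Prop where
  upos : 0 < Useq g1 h k x
  hderiv : HasDerivAt (Useq g1 h k) (Vseq g1 h k x) x
  vpos : 0 < Vseq g1 h k x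
  ult : Useq g1 h k x < Useq g1 h (k + 1) x
  vlt : Vseq g1 h k x < Vseq g1 h (k + 1) x

lemma uvfacts {g1 : ℝ → ℝ} {h : ℝ} (hh : 0 < h)
    (hgd : ∀ y, HasDerivAt g1 (deriv g1 y) y)
    (hgpos : ∀ y > (0:ℝ), 0 < g1 y) (hgdpos : ∀ y > (0:ℝ), 0 < deriv g1 y)
    {x : ℝ} (hx : 0 < x) :
    ∀ k, UVFacts g1 h x k := by
  have h2 : (0:ℝ) < h ^ 2 := by positivity
  have base0 : UVFacts g1 h x 0 := by
    refine ⟨hx, ?_, one_pos, ?_, ?_⟩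
    · simpa [Useq, Vseq] using (hasDerivAt_id' x)
    · show x < x + h ^ 2 / 2 * g1 x
      have := hgpos x hx
      nlinarith
    · show (1:ℝ) < 1 + h ^ 2 / 2 * deriv g1 x
      have := hgdpos x hx
      nlinarith
  have base1 : UVFacts g1 h x 1 := by
    have hu1 : 0 < Useq g1 h 1 x := base0.upos.trans base0.ult
    refine ⟨hu1, ?_, lt_trans base0.vpos base0.vlt, ?_, ?_⟩
    · show HasDerivAt (fun y => y + h ^ 2 / 2 * g1 y) (1 + h ^ 2 / 2 * deriv g1 x) x
      exact (hasDerivAt_id x).add ((hgd x).const_mul _)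
    · show Useq g1 h 1 x < 2 * Useq g1 h 1 x - Useq g1 h 0 x + h ^ 2 * g1 (Useq g1 h 1 x)
      have h1 := hgpos _ hu1
      have h0 : Useq g1 h 0 x < Useq g1 h 1 x := base0.ult
      nlinarith
    · show Vseq g1 h 1 x < 2 * Vseq g1 h 1 x - Vseq g1 h 0 x +
        h ^ 2 * (deriv g1 (Useq g1 h 1 x) * Vseq g1 h 1 x)
      have h1 := hgdpos _ hu1
      have h0 : Vseq g1 h 0 x < Vseq g1 h 1 x := base0.vlt
      have hv1 : 0 < Vseq g1 h 1 x := lt_trans base0.vpos base0.vlt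
      nlinarith [mul_pos h2 (mul_pos h1 hv1)]
  have step : ∀ k, UVFacts g1 h x k → UVFacts g1 h x (k + 1) → UVFacts g1 h x (k + 2) := by
    intro k pk pk1
    have hu2 : 0 < Useq g1 h (k + 2) x := pk1.upos.trans pk1.ult
    have hv2 : 0 < Vseq g1 h (k + 2) x := lt_trans pk1.vpos pk1.vlt
    refine ⟨hu2, ?_, hv2, ?_, ?_⟩
    · show HasDerivAt (fun y => 2 * Useq g1 h (k + 1) y - Useq g1 h k y +
        h ^ 2 * g1 (Useq g1 h (k + 1) y))
        (2 * Vseq g1 h (k + 1) x - Vseq g1 h k x +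
          h ^ 2 * (deriv g1 (Useq g1 h (k + 1) x) * Vseq g1 h (k + 1) x)) x
      exact (((pk1.hderiv.const_mul 2).sub pk.hderiv).add
        (((hgd _).comp x pk1.hderiv).const_mul (h ^ 2)))
    · show Useq g1 h (k + 2) x < 2 * Useq g1 h (k + 2) x - Useq g1 h (k + 1) x +
        h ^ 2 * g1 (Useq g1 h (k + 2) x)
      have h1 := hgpos _ hu2
      have h0 : Useq g1 h (k + 1) x < Useq g1 h (k + 2) x := pk1.ult
      nlinarith
    · show Vseq g1 h (k + 2) x < 2 * Vseq g1 h (k + 2) x - Vseq g1 h (k + 1) x +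
        h ^ 2 * (deriv g1 (Useq g1 h (k + 2) x) * Vseq g1 h (k + 2) x)
      have h1 := hgdpos _ hu2
      have h0 : Vseq g1 h (k + 1) x < Vseq g1 h (k + 2) x := pk1.vlt
      nlinarith [mul_pos h2 (mul_pos h1 hv2)]
  intro k
  induction k using Nat.twoStepInduction with
  | zero => exact base0
  | one => exact base1
  | more k ih1 ih2 => exact step k ih1 ih2

lemma trapError_eq (g1 : ℝ → ℝ) (h : ℝ) (n : ℕ) (hn : 2 ≤ n) (x : ℝ) :
    trapError g1 h n x = ∑ j ∈ Finset.range (n - 1),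
      ((g1 (Useq g1 h j x) + g1 (Useq g1 h (j + 1) x)) / 2 *
        (Useq g1 h (j + 1) x - Useq g1 h j x) -
       (primG1 g1 (Useq g1 h (j + 1) x) - primG1 g1 (Useq g1 h j x))) := by
  rw [Finset.sum_sub_distrib,
    Finset.sum_range_sub (fun j => primG1 g1 (Useq g1 h j x)) (n - 1)]
  unfold trapError discU
  have hIcc : Finset.Icc 1 (n - 1) = Finset.Ico 1 n := by
    rw [← Finset.Ico_add_one_right_eq_Icc]
    congr 1
    omega
  rw [hIcc, Finset.sum_Ico_eq_sum_range]
  congr 1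
  apply Finset.sum_congr rfl
  intro j _
  have e1 : 1 + j - 1 = j := by omega
  have e2 : 1 + j + 1 - 1 = j + 1 := by omega
  rw [e1, e2]

theorem stmt_4 (n : ℕ) (hn : 2 ≤ n) (h : ℝ) (hh : h = 1 / ((n : ℝ) - 1))
    (g1 g2 : ℝ → ℝ)
    (hg1C : ContDiff ℝ 3 g1) (hg2C : ContDiff ℝ 3 g2)
    (hg10 : g1 0 = 0) (hg20 : g2 0 = 0)
    (hg1d : ∀ x > (0:ℝ), 0 < deriv g1 x) (hg2d : ∀ x > (0:ℝ), 0 < deriv g2 x)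
    (hg1dd : ∀ x > (0:ℝ), 0 < deriv (deriv g1) x)
    (hg2dd : ∀ x > (0:ℝ), 0 < deriv (deriv g2) x)
    (hg1ddd : ∀ x > (0:ℝ), 0 ≤ deriv (deriv (deriv g1)) x)
    (hg2ddd : ∀ x > (0:ℝ), 0 ≤ deriv (deriv (deriv g2)) x)
    (α : ℝ) (hα : 0 < α) (u : ℕ → ℝ) (hu : IsSolution g1 g2 n h α u) :
    1 / 2 * α ^ 2 * (g2 (u n)) ^ 2 - (primG1 g1 (u n) - primG1 g1 (u 1)) =
      ((∑ k ∈ Finset.Icc 1 (n - 1),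
          (g1 (u k) + g1 (u (k + 1))) / 2 * (u (k + 1) - u k)) -
        (primG1 g1 (u n) - primG1 g1 (u 1)))
      + h ^ 2 / 8 * ((g1 (u n)) ^ 2 - (g1 (u 1)) ^ 2) ∧
    (∀ x > (0:ℝ), 0 < trapError g1 h n x) ∧
    StrictMonoOn (trapError g1 h n) (Set.Ioi 0) := by
  have hnr : (2:ℝ) ≤ (n:ℝ) := by exact_mod_cast hn
  have hhpos : 0 < h := by
    rw [hh]
    have : (0:ℝ) < (n:ℝ) - 1 := by linarith
    positivity
  have hne : h ≠ 0 := hhpos.ne'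
  have hg1c : Continuous g1 := hg1C.continuous
  have hgd : ∀ y, HasDerivAt g1 (deriv g1 y) y :=
    fun y => ((hg1C.differentiable (by norm_num)) y).hasDerivAt
  have hg1pos := my_pos hg1C hg10 hg1d
  have hstrict := my_strictConvex hg1C hg1dd
  have hdconv := my_deriv_convex hg1C hg1ddd
  have hd1c : Continuous (deriv g1) := hg1C.continuous_deriv (by norm_num)
  have herrpos : ∀ x, 0 < x → ∀ j : ℕ,
      0 < (g1 (Useq g1 h j x) + g1 (Useq g1 h (j + 1) x)) / 2 *
        (Useq g1 h (j + 1) x - Useq g1 h j x) -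
        (primG1 g1 (Useq g1 h (j + 1) x) - primG1 g1 (Useq g1 h j x)) := by
    intro x hx j
    have F := uvfacts hhpos hgd hg1pos hg1d hx
    have h1 := (F j).upos
    have h2 := (F j).ult
    rw [primG1_sub hg1c]
    have := trap_lt hg1c hstrict h1.le h2
    linarith
  have hkey : ∀ x : ℝ, 0 < x → ∃ d, HasDerivAt (trapError g1 h n) d x ∧ 0 < d := by
    intro x hx
    have F := uvfacts hhpos hgd hg1pos hg1d hx
    have hfun : trapError g1 h n = fun y => ∑ j ∈ Finset.range (n - 1),
        ((g1 (Useq g1 h j y) + g1 (Useq g1 h (j + 1) y)) / 2 *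
          (Useq g1 h (j + 1) y - Useq g1 h j y) -
         (primG1 g1 (Useq g1 h (j + 1) y) - primG1 g1 (Useq g1 h j y))) :=
      funext (trapError_eq g1 h n hn)
    set D : ℕ → ℝ := fun j =>
      (deriv g1 (Useq g1 h j x) * Vseq g1 h j x +
        deriv g1 (Useq g1 h (j + 1) x) * Vseq g1 h (j + 1) x) / 2 *
        (Useq g1 h (j + 1) x - Useq g1 h j x) +
      (g1 (Useq g1 h j x) + g1 (Useq g1 h (j + 1) x)) / 2 *
        (Vseq g1 h (j + 1) x - Vseq g1 h j x) -
      (g1 (Useq g1 h (j + 1) x) * Vseq g1 h (j + 1) x -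
        g1 (Useq g1 h j x) * Vseq g1 h j x) with hD
    refine ⟨∑ j ∈ Finset.range (n - 1), D j, ?_, ?_⟩
    · rw [hfun]
      apply HasDerivAt.fun_sum
      intro j _
      have hUj := (F j).hderiv
      have hUj1 := (F (j + 1)).hderiv
      have hga : HasDerivAt (fun y => g1 (Useq g1 h j y))
          (deriv g1 (Useq g1 h j x) * Vseq g1 h j x) x := (hgd _).comp x hUj
      have hgb : HasDerivAt (fun y => g1 (Useq g1 h (j + 1) y))
          (deriv g1 (Useq g1 h (j + 1) x) * Vseq g1 h (j + 1) x) x := (hgd _).comp x hUj1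
      have hpa : HasDerivAt (fun y => primG1 g1 (Useq g1 h j y))
          (g1 (Useq g1 h j x) * Vseq g1 h j x) x := (primG1_hasDeriv hg1c _).comp x hUj
      have hpb : HasDerivAt (fun y => primG1 g1 (Useq g1 h (j + 1) y))
          (g1 (Useq g1 h (j + 1) x) * Vseq g1 h (j + 1) x) x :=
        (primG1_hasDeriv hg1c _).comp x hUj1
      exact (((hga.add hgb).div_const 2).mul (hUj1.sub hUj)).sub (hpb.sub hpa)
    · apply Finset.sum_pos
      · intro j _
        have ha := (F j).upos
        have hab := (F j).ult
        have hV := (F j).vpos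
        have hVlt := (F j).vlt
        have hB := my_slope_lt hg1C hg1dd ha.le hab
        have hAB : g1 (Useq g1 h (j + 1) x) - g1 (Useq g1 h j x) ≤
            (deriv g1 (Useq g1 h j x) + deriv g1 (Useq g1 h (j + 1) x)) / 2 *
              (Useq g1 h (j + 1) x - Useq g1 h j x) := by
          have ht := trap_le hd1c hdconv ha.le hab
          rw [my_ftc hg1C] at ht
          exact ht
        rw [hD]
        have hBpos : 0 < deriv g1 (Useq g1 h (j + 1) x) *
            (Useq g1 h (j + 1) x - Useq g1 h j x) -
            (g1 (Useq g1 h (j + 1) x) - g1 (Useq g1 h j x)) := by linarith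
        have hApos : 0 ≤ (deriv g1 (Useq g1 h j x) + deriv g1 (Useq g1 h (j + 1) x)) / 2 *
            (Useq g1 h (j + 1) x - Useq g1 h j x) -
            (g1 (Useq g1 h (j + 1) x) - g1 (Useq g1 h j x)) := by linarith
        nlinarith [mul_nonneg hV.le hApos, mul_pos (sub_pos.2 hVlt) hBpos]
      · rw [Finset.nonempty_range_iff]
        omega
  refine ⟨?_, ?_, ?_⟩
  · -- part 1
    obtain ⟨hpos, h21, hrec, hend⟩ := hu
    have key : ∀ m, 1 ≤ m → m ≤ n - 1 →
        (u (m + 1) - u m) ^ 2 = (u 2 - u 1) ^ 2 +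
          h ^ 2 * (2 * (∑ k ∈ Finset.Icc 1 m,
              (g1 (u k) + g1 (u (k + 1))) / 2 * (u (k + 1) - u k))
            - g1 (u 1) * (u 2 - u 1) - g1 (u (m + 1)) * (u (m + 1) - u m)) := by
      intro m hm
      induction m, hm using Nat.le_induction with
      | base =>
        intro _
        simp only [Finset.Icc_self, Finset.sum_singleton]
        rw [show (1:ℕ) + 1 = 2 from rfl]
        ring
      | succ m hm ih =>
        intro hle
        have ih' := ih (by omega)
        have hrec' := hrec (m + 1) (by omega) hle
        rw [Finset.sum_Icc_succ_top (by omega)]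
        have e1 : m + 1 - 1 = m := by omega
        rw [e1] at hrec'
        have e2 : m + 1 + 1 = m + 2 := by omega
        rw [e2] at *
        linear_combination ih' + (u (m + 2) - u m) * hrec'
    have hn1 : (1:ℕ) ≤ n - 1 := by omega
    have key' := key (n - 1) hn1 le_rfl
    have e3 : n - 1 + 1 = n := by omega
    rw [e3] at key'
    rw [h21, hend] at key'
    have hmain : h ^ 2 * (1 / 2 * α ^ 2 * (g2 (u n)) ^ 2) =
        h ^ 2 * ((∑ k ∈ Finset.Icc 1 (n - 1),
            (g1 (u k) + g1 (u (k + 1))) / 2 * (u (k + 1) - u k))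
          + h ^ 2 / 8 * ((g1 (u n)) ^ 2 - (g1 (u 1)) ^ 2)) := by
      linear_combination key' / 2
    have := mul_left_cancel₀ (pow_ne_zero 2 hne) hmain
    linarith
  · intro x hx
    rw [trapError_eq g1 h n hn x]
    refine Finset.sum_pos (fun j _ => herrpos x hx j) ?_
    rw [Finset.nonempty_range_iff]
    omega
  · apply strictMonoOn_of_deriv_pos (convex_Ioi 0)
    · intro x hx
      obtain ⟨d, hd, _⟩ := hkey x hx
      exact hd.continuousAt.continuousWithinAt
    · intro x hx
      rw [interior_Ioi] at hx
      obtain ⟨d, hd, hdpos⟩ := hkey x hx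
      rwa [hd.deriv]
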